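/- For every positive integer M, τ^{M} / ψ_τ(l) → 0 as τ → +∞; that is, the reciprocal 1/ψ_τ(l) (which equals the value at 0 of the derivative of the solution normalized by ψ_τ(l)) decays faster than any inverse power of τ. -/

import Mathlib

open Real MeasureTheory Filter intervalIntegral

private lemma abs_sinh_le_exp' (s : ℝ) (hs : 0 ≤ s) : |Real.sinh s| ≤ Real.exp s := by
  rw [abs_of_nonneg (Real.sinh_nonneg_iff.2 hs), Real.sinh_eq, Real.exp_neg]
  have h1 : 0 < Real.exp s := Real.exp_pos s
  have h2 : 0 < (Real.exp s)⁻¹ := by positivity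
  nlinarith

private lemma exp_quarter_le_sinh (s : ℝ) (hs : 1 ≤ s) : Real.exp s / 4 ≤ Real.sinh s := by
  rw [Real.sinh_eq, Real.exp_neg]
  have hE : 2 ≤ Real.exp s := by nlinarith [Real.add_one_le_exp s]
  have hEpos : 0 < Real.exp s := Real.exp_pos s
  have hinv : Real.exp s * (Real.exp s)⁻¹ = 1 := mul_inv_cancel₀ hEpos.ne'
  nlinarith [inv_pos.2 hEpos]

set_option maxHeartbeats 1600000 in
/-- For every positive integer `M`, `τ^M / ψ_τ(l) → 0` as `τ → +∞`:
the reciprocal `1/ψ_τ(l)` decays faster than any inverse power of `τ`. -/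
theorem inverse_psi_superpolynomial_decay (l : ℝ) (hl : 0 < l) (q : ℝ → ℝ)
    (hq : IntegrableOn q (Set.Icc 0 l)) (ψ : ℝ → ℝ → ℝ)
    (hψcont : ∀ τ > (0:ℝ), ContinuousOn (ψ τ) (Set.Icc 0 l))
    (hψ : ∀ τ > (0:ℝ), ∀ x ∈ Set.Icc 0 l,
      ψ τ x = Real.sinh (τ * x) / τ +
        (1 / τ) * ∫ t in (0:ℝ)..x, Real.sinh (τ * (x - t)) * q t * ψ τ t)
    (M : ℕ) (hM : 0 < M) :
    Tendsto (fun τ : ℝ => τ ^ M / ψ τ l) atTop (nhds 0) := by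
  set Q : ℝ := ∫ t in (0:ℝ)..l, |q t| with hQdef
  have hqabs : IntegrableOn (fun t => |q t|) (Set.Icc 0 l) := hq.abs
  have hQintl : IntervalIntegrable (fun t => |q t|) volume 0 l := by
    apply MeasureTheory.IntegrableOn.intervalIntegrable
    rwa [Set.uIcc_of_le hl.le]
  have hQ0 : 0 ≤ Q :=
    intervalIntegral.integral_nonneg hl.le (fun t _ => abs_nonneg _)
  -- partial integrals of |q| are bounded by Q
  have hQmono : ∀ x ∈ Set.Icc (0:ℝ) l, (∫ t in (0:ℝ)..x, |q t|) ≤ Q := by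
    intro x hx
    exact intervalIntegral.integral_mono_interval le_rfl hx.1 hx.2
      (Filter.Eventually.of_forall fun t => abs_nonneg _) hQintl
  have hQintx : ∀ x ∈ Set.Icc (0:ℝ) l, IntervalIntegrable (fun t => |q t|) volume 0 x := by
    intro x hx
    apply MeasureTheory.IntegrableOn.intervalIntegrable
    rw [Set.uIcc_of_le hx.1]
    exact hqabs.mono_set (Set.Icc_subset_Icc le_rfl hx.2)
  set τ₀ : ℝ := max 1 (max (2 * Q) (max (1 / l) (16 * Q))) with hτ₀def
  -- Step 1: a priori bound |ψ τ x| ≤ (2/τ) e^{τ x}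
  have bound : ∀ τ : ℝ, τ₀ ≤ τ → ∀ x ∈ Set.Icc 0 l, |ψ τ x| ≤ 2 / τ * Real.exp (τ * x) := by
    intro τ hτ
    have hτ1 : (1:ℝ) ≤ τ := le_trans (le_max_left _ _) hτ
    have hτpos : (0:ℝ) < τ := lt_of_lt_of_le one_pos hτ1
    have hτQ : 2 * Q ≤ τ := le_trans (le_trans (le_max_left _ _) (le_max_right _ _)) hτ
    set f : ℝ → ℝ := fun x => |ψ τ x| * Real.exp (-(τ * x)) with hfdef
    have hfc : ContinuousOn f (Set.Icc 0 l) :=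
      (hψcont τ hτpos).abs.mul ((Real.continuous_exp.comp (by continuity)).continuousOn)
    obtain ⟨x₀, hx₀, hmax⟩ := isCompact_Icc.exists_isMaxOn (Set.nonempty_Icc.2 hl.le) hfc
    set B : ℝ := f x₀ with hBdef
    have hB0 : 0 ≤ B := mul_nonneg (abs_nonneg _) (Real.exp_pos _).le
    have key : ∀ t ∈ Set.Icc (0:ℝ) l, |ψ τ t| ≤ B * Real.exp (τ * t) := by
      intro t ht
      have h1 : f t ≤ B := hmax ht
      have h2 : Real.exp (-(τ * t)) * Real.exp (τ * t) = 1 := by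
        rw [← Real.exp_add]; simp
      calc |ψ τ t| = f t * Real.exp (τ * t) := by
            rw [hfdef]; dsimp only; rw [mul_assoc, h2, mul_one]
        _ ≤ B * Real.exp (τ * t) := by
            exact mul_le_mul_of_nonneg_right h1 (Real.exp_pos _).le
    -- bound the integral at x₀
    have hIbound : |∫ t in (0:ℝ)..x₀, Real.sinh (τ * (x₀ - t)) * q t * ψ τ t|
        ≤ B * Real.exp (τ * x₀) * Q := by
      have hb : IntervalIntegrable (fun t => B * Real.exp (τ * x₀) * |q t|) volume 0 x₀ :=
        (hQintx x₀ hx₀).const_mul _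
      have hae : ∀ᵐ t ∂(volume.restrict (Set.uIoc (0:ℝ) x₀)),
          ‖Real.sinh (τ * (x₀ - t)) * q t * ψ τ t‖ ≤ B * Real.exp (τ * x₀) * |q t| := by
        refine (ae_restrict_mem measurableSet_uIoc).mono fun t ht => ?_
        rw [Set.uIoc_of_le hx₀.1] at ht
        have ht1 : 0 < t := ht.1
        have ht2 : t ≤ x₀ := ht.2
        have htl : t ∈ Set.Icc (0:ℝ) l := ⟨ht1.le, ht2.trans hx₀.2⟩
        have hs : |Real.sinh (τ * (x₀ - t))| ≤ Real.exp (τ * (x₀ - t)) :=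
          abs_sinh_le_exp' _ (by nlinarith)
        have hexp : Real.exp (τ * (x₀ - t)) * Real.exp (τ * t) = Real.exp (τ * x₀) := by
          rw [← Real.exp_add]; ring_nf
        calc ‖Real.sinh (τ * (x₀ - t)) * q t * ψ τ t‖
            = |Real.sinh (τ * (x₀ - t))| * |q t| * |ψ τ t| := by
              rw [Real.norm_eq_abs, abs_mul, abs_mul]
          _ ≤ Real.exp (τ * (x₀ - t)) * |q t| * (B * Real.exp (τ * t)) := by
              apply mul_le_mul
              · exact mul_le_mul_of_nonneg_right hs (abs_nonneg _)
              · exact key t htl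
              · exact abs_nonneg _
              · positivity
          _ = B * Real.exp (τ * x₀) * |q t| := by rw [← hexp]; ring
      calc |∫ t in (0:ℝ)..x₀, Real.sinh (τ * (x₀ - t)) * q t * ψ τ t|
          ≤ abs (∫ t in (0:ℝ)..x₀, B * Real.exp (τ * x₀) * |q t|) :=
            intervalIntegral.norm_integral_le_abs_of_norm_le hae hb
        _ = B * Real.exp (τ * x₀) * ∫ t in (0:ℝ)..x₀, |q t| := by
            rw [intervalIntegral.integral_const_mul]
            rw [abs_of_nonneg]
            exact mul_nonneg (by positivity)
              (intervalIntegral.integral_nonneg hx₀.1 fun t _ => abs_nonneg _)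
        _ ≤ B * Real.exp (τ * x₀) * Q := by
            exact mul_le_mul_of_nonneg_left (hQmono x₀ hx₀) (by positivity)
    -- derive B ≤ 2/τ
    have heq := hψ τ hτpos x₀ hx₀
    set I : ℝ := ∫ t in (0:ℝ)..x₀, Real.sinh (τ * (x₀ - t)) * q t * ψ τ t with hIdef
    have hψx₀ : |ψ τ x₀| ≤ Real.exp (τ * x₀) / τ + (1 / τ) * (B * Real.exp (τ * x₀) * Q) := by
      rw [heq]
      have hsinh : |Real.sinh (τ * x₀)| ≤ Real.exp (τ * x₀) :=
        abs_sinh_le_exp' _ (by nlinarith [hx₀.1])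
      calc |Real.sinh (τ * x₀) / τ + (1 / τ) * I|
          ≤ |Real.sinh (τ * x₀) / τ| + |(1 / τ) * I| := abs_add_le _ _
        _ ≤ Real.exp (τ * x₀) / τ + (1 / τ) * (B * Real.exp (τ * x₀) * Q) := by
            apply add_le_add
            · rw [abs_div, abs_of_pos hτpos]
              gcongr
            · rw [abs_mul, abs_of_pos (by positivity : (0:ℝ) < 1 / τ)]
              exact mul_le_mul_of_nonneg_left hIbound (by positivity)
    have hBrel : B * Real.exp (τ * x₀) ≤ Real.exp (τ * x₀) / τ + (1 / τ) *
        (B * Real.exp (τ * x₀) * Q) := by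
      have h2 : Real.exp (-(τ * x₀)) * Real.exp (τ * x₀) = 1 := by
        rw [← Real.exp_add]; simp
      calc B * Real.exp (τ * x₀) = |ψ τ x₀| := by
            rw [hBdef, hfdef]; dsimp only; rw [mul_assoc, h2, mul_one]
        _ ≤ _ := hψx₀
    have hB : B ≤ 2 / τ := by
      have hE : 0 < Real.exp (τ * x₀) := Real.exp_pos _
      have h' : B ≤ 1 / τ + B * Q / τ := by
        rw [← mul_le_mul_iff_of_pos_right hE]
        calc B * Real.exp (τ * x₀) ≤ _ := hBrel
          _ = (1 / τ + B * Q / τ) * Real.exp (τ * x₀) := by field_simp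
      -- B*Q/τ ≤ B/2 since 2Q ≤ τ
      have h'' : B * Q / τ ≤ B / 2 := by
        rw [div_le_div_iff₀ hτpos two_pos]
        nlinarith
      have h3 : 2 / τ = 2 * (1 / τ) := by ring
      linarith
    intro x hx
    calc |ψ τ x| ≤ B * Real.exp (τ * x) := key x hx
      _ ≤ 2 / τ * Real.exp (τ * x) :=
        mul_le_mul_of_nonneg_right hB (Real.exp_pos _).le
  -- Step 2: lower bound for ψ τ l
  have lower : ∀ τ : ℝ, τ₀ ≤ τ → Real.exp (τ * l) / (8 * τ) ≤ ψ τ l := by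
    intro τ hτ
    have hτ1 : (1:ℝ) ≤ τ := le_trans (le_max_left _ _) hτ
    have hτpos : (0:ℝ) < τ := lt_of_lt_of_le one_pos hτ1
    have hτl : 1 / l ≤ τ :=
      le_trans (le_trans (le_max_left _ _) (le_trans (le_max_right _ _) (le_max_right _ _))) hτ
    have hτQ16 : 16 * Q ≤ τ :=
      le_trans (le_trans (le_max_right _ _) (le_trans (le_max_right _ _) (le_max_right _ _))) hτ
    have hτl1 : 1 ≤ τ * l := by
      rw [div_le_iff₀ hl] at hτl; linarith
    have hlI : l ∈ Set.Icc (0:ℝ) l := ⟨hl.le, le_rfl⟩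
    have heq := hψ τ hτpos l hlI
    -- bound integral
    have hIbound : |∫ t in (0:ℝ)..l, Real.sinh (τ * (l - t)) * q t * ψ τ t|
        ≤ 2 / τ * Real.exp (τ * l) * Q := by
      have hb : IntervalIntegrable (fun t => 2 / τ * Real.exp (τ * l) * |q t|) volume 0 l :=
        hQintl.const_mul _
      have hae : ∀ᵐ t ∂(volume.restrict (Set.uIoc (0:ℝ) l)),
          ‖Real.sinh (τ * (l - t)) * q t * ψ τ t‖ ≤ 2 / τ * Real.exp (τ * l) * |q t| := by
        refine (ae_restrict_mem measurableSet_uIoc).mono fun t ht => ?_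
        rw [Set.uIoc_of_le hl.le] at ht
        have htl : t ∈ Set.Icc (0:ℝ) l := ⟨ht.1.le, ht.2⟩
        have hs : |Real.sinh (τ * (l - t))| ≤ Real.exp (τ * (l - t)) :=
          abs_sinh_le_exp' _ (by nlinarith [ht.2])
        have hexp : Real.exp (τ * (l - t)) * Real.exp (τ * t) = Real.exp (τ * l) := by
          rw [← Real.exp_add]; ring_nf
        calc ‖Real.sinh (τ * (l - t)) * q t * ψ τ t‖
            = |Real.sinh (τ * (l - t))| * |q t| * |ψ τ t| := by
              rw [Real.norm_eq_abs, abs_mul, abs_mul]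
          _ ≤ Real.exp (τ * (l - t)) * |q t| * (2 / τ * Real.exp (τ * t)) := by
              apply mul_le_mul
              · exact mul_le_mul_of_nonneg_right hs (abs_nonneg _)
              · exact bound τ hτ t htl
              · exact abs_nonneg _
              · positivity
          _ = 2 / τ * Real.exp (τ * l) * |q t| := by rw [← hexp]; ring
      calc |∫ t in (0:ℝ)..l, Real.sinh (τ * (l - t)) * q t * ψ τ t|
          ≤ abs (∫ t in (0:ℝ)..l, 2 / τ * Real.exp (τ * l) * |q t|) :=
            intervalIntegral.norm_integral_le_abs_of_norm_le hae hb
        _ = 2 / τ * Real.exp (τ * l) * Q := by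
            rw [intervalIntegral.integral_const_mul, abs_of_nonneg]
            exact mul_nonneg (by positivity)
              (intervalIntegral.integral_nonneg hl.le fun t _ => abs_nonneg _)
    have hsinh : Real.exp (τ * l) / 4 ≤ Real.sinh (τ * l) := exp_quarter_le_sinh _ hτl1
    have hE : 0 < Real.exp (τ * l) := Real.exp_pos _
    have habs : -(2 / τ * Real.exp (τ * l) * Q) ≤ ∫ t in (0:ℝ)..l,
        Real.sinh (τ * (l - t)) * q t * ψ τ t := neg_le_of_abs_le hIbound
    rw [heq]
    have h1 : Real.exp (τ * l) / 4 / τ ≤ Real.sinh (τ * l) / τ := by gcongr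
    have h2 : -(1 / τ * (2 / τ * Real.exp (τ * l) * Q)) ≤
        (1 / τ) * ∫ t in (0:ℝ)..l, Real.sinh (τ * (l - t)) * q t * ψ τ t := by
      have hm := mul_le_mul_of_nonneg_left habs (by positivity : (0:ℝ) ≤ 1 / τ)
      calc -(1 / τ * (2 / τ * Real.exp (τ * l) * Q))
          = 1 / τ * -(2 / τ * Real.exp (τ * l) * Q) := by ring
        _ ≤ _ := hm
    -- combine: ψ τ l ≥ e^{τl}/(4τ) − 2Q e^{τl}/τ² ≥ e^{τl}/(8τ)
    have hQτ : 2 * Q / τ ≤ 1 / 8 := by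
      rw [div_le_div_iff₀ hτpos (by norm_num : (0:ℝ) < 8)]
      nlinarith
    have htarget : Real.exp (τ * l) / (8 * τ) ≤
        Real.exp (τ * l) / 4 / τ - 1 / τ * (2 / τ * Real.exp (τ * l) * Q) := by
      rw [← sub_nonneg]
      have : Real.exp (τ * l) / 4 / τ - 1 / τ * (2 / τ * Real.exp (τ * l) * Q)
          - Real.exp (τ * l) / (8 * τ) = Real.exp (τ * l) / τ * (1 / 8 - 2 * Q / τ) := by
        field_simp; ring
      rw [this]
      exact mul_nonneg (by positivity) (by linarith)
    linarith
  -- Step 3: squeeze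
  have hg : Tendsto (fun τ : ℝ => 8 * τ ^ (M + 1) * Real.exp (-(τ * l))) atTop (nhds 0) := by
    have h1 : Tendsto (fun τ : ℝ => τ * l) atTop atTop :=
      Filter.tendsto_id.atTop_mul_const hl
    have h2 := (tendsto_pow_mul_exp_neg_atTop_nhds_zero (M + 1)).comp h1
    have h3 := h2.const_mul (8 / l ^ (M + 1))
    rw [mul_zero] at h3
    convert h3 using 2 with τ
    show 8 * τ ^ (M + 1) * Real.exp (-(τ * l)) = 8 / l ^ (M + 1) * ((τ * l) ^ (M + 1) * Real.exp (-(τ * l)))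
    rw [mul_pow]
    field_simp
    try ring
  apply tendsto_of_tendsto_of_tendsto_of_le_of_le' tendsto_const_nhds hg
  · filter_upwards [eventually_ge_atTop τ₀] with τ hτ
    have hτ1 : (1:ℝ) ≤ τ := le_trans (le_max_left _ _) hτ
    have hψpos : 0 < ψ τ l :=
      lt_of_lt_of_le (by positivity) (lower τ hτ)
    positivity
  · filter_upwards [eventually_ge_atTop τ₀] with τ hτ
    have hτ1 : (1:ℝ) ≤ τ := le_trans (le_max_left _ _) hτ
    have hτpos : (0:ℝ) < τ := lt_of_lt_of_le one_pos hτ1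
    have hlow := lower τ hτ
    have hψpos : 0 < ψ τ l := lt_of_lt_of_le (by positivity) hlow
    calc τ ^ M / ψ τ l ≤ τ ^ M / (Real.exp (τ * l) / (8 * τ)) := by
          gcongr
          all_goals first | exact hlow | positivity
      _ = 8 * τ ^ (M + 1) * Real.exp (-(τ * l)) := by
          rw [Real.exp_neg, pow_succ]
          field_simp
          try ring
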